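/- Let b be a fixed non-zero integer, let A_1,...,A_r be fixed positive integers, and let d be an integer with 1 ≤ d ≤ r. If it is not the case that b < 0 and d is even, then the equation b·(n_1!·A_1^{n_1})·(n_2!·A_2^{n_2})···(n_r!·A_r^{n_r}) = x^d has infinitely many solutions in positive integers n_1,...,n_r and integers x. If b < 0 and d is even, the equation has no such solutions. -/

import Mathlib

open Finset

private lemma key_id (B P a R K t e C L m : ℕ)
    (hC : C = B * P * a ^ e) (hm : m = C * ((e+1)*t)^(e+1)) :
    B * ((m * K)^e * R^((e+1)*(L+1)) * (K * a^((e+1)*L + e)) * P)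
      = (C * K * R^(L+1) * a^L * ((e+1)*t)^e)^(e+1) := by
  have h1 : (m * K)^e = C^e * ((e+1)*t)^((e+1)*e) * K^e := by
    rw [hm, mul_pow, mul_pow, ← pow_mul]
  rw [h1, hC]; ring

private lemma key_id' (B P a R t e C M m : ℕ) (hMpos : 0 < M)
    (hC : C = B * P * a ^ e) (hmM : m = (e+1) * M) (hm : m = C * ((e+1)*t)^(e+1)) :
    B * ((m.factorial)^e * R^m * ((m-1).factorial * a^(m-1)) * P)
      = (C * (m-1).factorial * R^M * a^(M-1) * ((e+1)*t)^e)^(e+1) := by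
  obtain ⟨L, rfl⟩ : ∃ L, M = L + 1 := ⟨M-1, by omega⟩
  have hme : m = (e+1)*L + e + 1 := by rw [hmM]; ring
  have hmpos : 0 < m := by omega
  have h1 : m.factorial = m * (m-1).factorial := (Nat.mul_factorial_pred hmpos.ne').symm
  have h3 : R^m = R^((e+1)*(L+1)) := by rw [hmM]
  have h2 : m - 1 = (e+1)*L + e := by omega
  rw [h1, h3, h2]
  simp only [Nat.add_sub_cancel]
  exact key_id B P a R _ t e C L m hC hm

private lemma prod_eval (r e : ℕ) (her : e < r) (A' : ℕ → ℕ) (m : ℕ) :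
    ∏ j ∈ range r, ((if j < e then m else if j = e then m - 1 else 1).factorial
        * A' j ^ (if j < e then m else if j = e then m - 1 else 1))
      = (m.factorial)^e * (∏ j ∈ range e, A' j)^m
          * ((m-1).factorial * A' e ^ (m-1)) * (∏ j ∈ Ico (e+1) r, A' j) := by
  set g' : ℕ → ℕ := fun j =>
    ((if j < e then m else if j = e then m - 1 else 1).factorial) *
      (A' j) ^ (if j < e then m else if j = e then m - 1 else 1) with hg'
  have hpart1 : ∏ j ∈ range e, g' j = (m.factorial)^e * (∏ j ∈ range e, A' j)^m := by
    have : ∏ j ∈ range e, g' j = ∏ j ∈ range e, (m.factorial * A' j ^ m) := by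
      refine Finset.prod_congr rfl fun j hj => ?_
      have hj' : j < e := mem_range.mp hj
      simp only [hg', if_pos hj']
    rw [this, prod_mul_distrib, prod_const, card_range, prod_pow]
  have hpart2 : g' e = (m - 1).factorial * A' e ^(m - 1) := by
    simp only [hg', lt_irrefl, if_neg, if_pos]
    simp
  have hpart3 : ∏ j ∈ Ico (e+1) r, g' j = ∏ j ∈ Ico (e+1) r, A' j := by
    refine Finset.prod_congr rfl fun j hj => ?_
    have hj' : e + 1 ≤ j := (mem_Ico.mp hj).1
    have h1 : ¬ (j < e) := by omega
    have h2 : ¬ (j = e) := by omega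
    simp only [hg', if_neg h1, if_neg h2, Nat.factorial_one, pow_one, one_mul]
  rw [← prod_range_mul_prod_Ico g' (by omega : e + 1 ≤ r), prod_range_succ,
    hpart1, hpart2, hpart3]

private lemma two_le_m (C e t : ℕ) (hC : 0 < C) : 2 ≤ C * ((e+1)*(t+2))^(e+1) := by
  have h0 : t + 2 ≤ (e+1)*(t+2) := Nat.le_mul_of_pos_left _ (Nat.succ_pos e)
  have h1 : (e+1)*(t+2) ≤ ((e+1)*(t+2))^(e+1) := Nat.le_self_pow (by omega) _
  have h2 : ((e+1)*(t+2))^(e+1) ≤ C * ((e+1)*(t+2))^(e+1) :=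
    Nat.le_mul_of_pos_left _ hC
  omega

private lemma natmain (r e : ℕ) (her : e < r) (A' : ℕ → ℕ) (B : ℕ) (hB : 0 < B)
    (hA' : ∀ j, 0 < A' j) (t : ℕ)
    (C : ℕ) (hC : C = B * (∏ j ∈ Ico (e+1) r, A' j) * A' e ^ e)
    (m : ℕ) (hm : m = C * ((e+1)*(t+2))^(e+1)) :
    ∃ X : ℕ, 0 < X ∧
      B * ∏ j ∈ range r, ((if j < e then m else if j = e then m - 1 else 1).factorial
        * A' j ^ (if j < e then m else if j = e then m - 1 else 1)) = X^(e+1) := by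
  have hPpos : 0 < ∏ j ∈ Ico (e+1) r, A' j := prod_pos fun j _ => hA' j
  have hRpos : 0 < ∏ j ∈ range e, A' j := prod_pos fun j _ => hA' j
  have hapos : 0 < A' e := hA' e
  have hCpos : 0 < C := by rw [hC]; positivity
  set M : ℕ := C * (e+1)^e * (t+2)^(e+1) with hMdef
  have hMpos : 0 < M := by rw [hMdef]; positivity
  have hmM : m = (e+1) * M := by
    have hps : ((e:ℕ)+1)^(e+1) = (e+1)^e*(e+1) := pow_succ _ _
    rw [hm, hMdef, mul_pow, hps]; ring
  refine ⟨C * (m-1).factorial * (∏ j ∈ range e, A' j)^M * (A' e)^(M-1) * ((e+1)*(t+2))^e,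
    by positivity, ?_⟩
  rw [prod_eval r e her A' m]
  exact key_id' B _ _ _ (t+2) e C M m hMpos
    hC hmM hm

/-- For a fixed non-zero integer `b`, fixed positive integers `A 0, ..., A (r-1)`
and an integer `d` with `1 ≤ d ≤ r`: if it is not the case that `b < 0` and `d` is even, then
`b * (n₁! A₁^{n₁}) ⋯ (n_r! A_r^{n_r}) = x ^ d` has infinitely many solutions in positive
integers `n₁, ..., n_r` and integers `x`; if `b < 0` and `d` is even, it has no such solutions. -/
theorem stmt_1 (r : ℕ) (b : ℤ) (hb : b ≠ 0)
    (A : Fin r → ℕ) (hA : ∀ i, 0 < A i) (d : ℕ) (hd1 : 1 ≤ d) (hd2 : d ≤ r) :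
    (¬(b < 0 ∧ Even d) →
      {p : (Fin r → ℕ) × ℤ | (∀ i, 0 < p.1 i) ∧
        b * ∏ i, (((p.1 i).factorial : ℤ) * (A i : ℤ) ^ (p.1 i)) = p.2 ^ d}.Infinite) ∧
    ((b < 0 ∧ Even d) →
      {p : (Fin r → ℕ) × ℤ | (∀ i, 0 < p.1 i) ∧
        b * ∏ i, (((p.1 i).factorial : ℤ) * (A i : ℤ) ^ (p.1 i)) = p.2 ^ d} = ∅) := by
  constructor
  · intro hne
    obtain ⟨e, rfl⟩ : ∃ e, d = e + 1 := ⟨d - 1, (Nat.succ_pred_eq_of_pos hd1).symm⟩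
    have her : e < r := hd2
    have h0r : 0 < r := by omega
    set A' : ℕ → ℕ := fun j => if h : j < r then A ⟨j, h⟩ else 1 with hA'def
    have hA'pos : ∀ j, 0 < A' j := by
      intro j; simp only [hA'def]; split
      · exact hA _
      · exact one_pos
    have hBpos : 0 < b.natAbs := Int.natAbs_pos.mpr hb
    set C : ℕ := b.natAbs * (∏ j ∈ Ico (e+1) r, A' j) * A' e ^ e with hCdef
    have hCpos : 0 < C := by
      have h1 : 0 < ∏ j ∈ Ico (e+1) r, A' j := prod_pos fun j _ => hA'pos j
      exact Nat.mul_pos (Nat.mul_pos hBpos h1) (pow_pos (hA'pos e) e)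
    set nf : ℕ → Fin r → ℕ := fun t i =>
      if (i : ℕ) < e then C * ((e+1)*(t+2))^(e+1)
      else if (i : ℕ) = e then C * ((e+1)*(t+2))^(e+1) - 1 else 1 with hnfdef
    have hpos : ∀ t i, 0 < nf t i := by
      intro t i
      have h2 := two_le_m C e t hCpos
      simp only [hnfdef]
      split
      · omega
      · split <;> omega
    have hmem : ∀ t : ℕ, ∃ x : ℤ,
        b * ∏ i : Fin r, (((nf t i).factorial : ℤ) * (A i : ℤ) ^ (nf t i)) = x ^ (e+1) := by
      intro t
      obtain ⟨X, hXpos, hXeq⟩ := natmain r e her A' b.natAbs hBpos hA'pos t C hCdef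
        (C * ((e+1)*(t+2))^(e+1)) rfl
      have hbridge : ∏ i : Fin r, ((nf t i).factorial * (A i) ^ (nf t i))
          = ∏ j ∈ range r,
            ((if j < e then C * ((e+1)*(t+2))^(e+1)
              else if j = e then C * ((e+1)*(t+2))^(e+1) - 1 else 1).factorial
            * A' j ^ (if j < e then C * ((e+1)*(t+2))^(e+1)
              else if j = e then C * ((e+1)*(t+2))^(e+1) - 1 else 1)) := by
        rw [← Fin.prod_univ_eq_prod_range]
        refine Finset.prod_congr rfl fun i _ => ?_
        simp only [hnfdef, hA'def, i.isLt, dif_pos]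
      have hcast : ∏ i : Fin r, (((nf t i).factorial : ℤ) * (A i : ℤ) ^ (nf t i))
          = ((∏ i : Fin r, ((nf t i).factorial * (A i) ^ (nf t i)) : ℕ) : ℤ) := by
        push_cast; rfl
      rcases lt_or_ge b 0 with hbneg | hbpos
      · have hodd : Odd (e+1) := by
          rcases Nat.even_or_odd (e+1) with hev | hod
          · exact absurd ⟨hbneg, hev⟩ hne
          · exact hod
        refine ⟨-(X : ℤ), ?_⟩
        rw [hcast, hbridge, hodd.neg_pow]
        have hbeq : b = -(b.natAbs : ℤ) := by omega
        rw [hbeq, neg_mul]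
        exact neg_inj.mpr (by exact_mod_cast hXeq)
      · refine ⟨(X : ℤ), ?_⟩
        rw [hcast, hbridge]
        have hbeq : b = (b.natAbs : ℤ) := by omega
        rw [hbeq]
        exact_mod_cast hXeq
    apply Set.infinite_of_injective_forall_mem
      (f := fun t : ℕ => ((nf t, (hmem t).choose) : (Fin r → ℕ) × ℤ))
    · intro s t hst
      have h1 : nf s = nf t := congrArg Prod.fst hst
      have h2 : nf s ⟨0, h0r⟩ = nf t ⟨0, h0r⟩ := congrFun h1 _
      have h2s := two_le_m C e s hCpos
      have h2t := two_le_m C e t hCpos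
      have hval : ∀ u : ℕ, nf u ⟨0, h0r⟩
          = if 0 < e then C * ((e+1)*(u+2))^(e+1) else C * ((e+1)*(u+2))^(e+1) - 1 := by
        intro u
        simp only [hnfdef]
        by_cases he : 0 < e
        · simp [he]
        · have he0 : e = 0 := by omega
          simp [he0]
      rw [hval s, hval t] at h2
      have hms : C * ((e+1)*(s+2))^(e+1) = C * ((e+1)*(t+2))^(e+1) := by
        by_cases he : 0 < e
        · rwa [if_pos he, if_pos he] at h2
        · rw [if_neg he, if_neg he] at h2
          omega
      have hpow : ((e+1)*(s+2))^(e+1) = ((e+1)*(t+2))^(e+1) :=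
        Nat.eq_of_mul_eq_mul_left hCpos hms
      have hlin : (e+1)*(s+2) = (e+1)*(t+2) :=
        Nat.pow_left_injective (by omega) hpow
      have : s + 2 = t + 2 := Nat.eq_of_mul_eq_mul_left (Nat.succ_pos e) hlin
      omega
    · intro t
      exact ⟨hpos t, (hmem t).choose_spec⟩
  · rintro ⟨hbneg, hdeven⟩
    rw [Set.eq_empty_iff_forall_notMem]
    rintro p ⟨hposp, heq⟩
    have hprod : 0 < ∏ i, (((p.1 i).factorial : ℤ) * (A i : ℤ) ^ (p.1 i)) := by
      apply prod_pos
      intro i _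
      have h1 : (0:ℤ) < ((p.1 i).factorial : ℤ) := by
        exact_mod_cast (p.1 i).factorial_pos
      have hAi : (0:ℤ) < (A i : ℤ) := by exact_mod_cast hA i
      have h2 : (0:ℤ) < (A i : ℤ) ^ (p.1 i) := pow_pos hAi _
      exact mul_pos h1 h2
    have hlt : b * ∏ i, (((p.1 i).factorial : ℤ) * (A i : ℤ) ^ (p.1 i)) < 0 :=
      mul_neg_of_neg_of_pos hbneg hprod
    have hge : 0 ≤ p.2 ^ d := hdeven.pow_nonneg _
    rw [heq] at hlt
    exact absurd hlt (not_lt.mpr hge)
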